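/- The number of n-th roots of unity ζ satisfying both ζ^a = -1 and ζ^b = -1 equals gcd(n, a, b) if v₂(a) = v₂(b) < v₂(n), and equals 0 otherwise. -/

import Mathlib

open Complex Polynomial

-- key: if ζ^c = -1 in ℂ, then v2(orderOf ζ) = v2(c)+1
theorem order_val (ζ : ℂ) (c : ℕ) (hc : 0 < c) (h : ζ ^ c = -1) :
    padicValNat 2 (orderOf ζ) = padicValNat 2 c + 1 := by
  have h2 : ζ ^ (2 * c) = 1 := by rw [mul_comm, pow_mul, h]; norm_num
  have hdvd : orderOf ζ ∣ 2 * c := orderOf_dvd_of_pow_eq_one h2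
  have hndvd : ¬ orderOf ζ ∣ c := by
    intro hd
    have := orderOf_dvd_iff_pow_eq_one.mp hd
    rw [h] at this
    norm_num at this
  have hdpos : 0 < orderOf ζ := Nat.pos_of_dvd_of_pos hdvd (by omega)
  obtain ⟨m, hm⟩ := hdvd
  have hmodd : ¬ 2 ∣ m := by
    rintro ⟨m', rfl⟩
    refine hndvd ⟨m', ?_⟩
    have h2 : 2 * c = 2 * (orderOf ζ * m') := by rw [hm]; ring
    omega
  have hm0 : m ≠ 0 := by rintro rfl; omega
  have : padicValNat 2 (2 * c) = padicValNat 2 (orderOf ζ) + padicValNat 2 m := by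
    rw [hm, padicValNat.mul hdpos.ne' hm0]
  rw [padicValNat.mul (by norm_num) hc.ne', padicValNat.self (by norm_num),
    padicValNat.eq_zero_of_not_dvd hmodd] at this
  omega

theorem stmt_6 (n a b : ℕ) (hn : 0 < n) (ha : 0 < a) (hb : 0 < b) :
    {ζ : ℂ | ζ ^ n = 1 ∧ ζ ^ a = -1 ∧ ζ ^ b = -1}.ncard =
      if padicValNat 2 a = padicValNat 2 b ∧ padicValNat 2 a < padicValNat 2 n
      then Nat.gcd n (Nat.gcd a b) else 0 := by
  by_cases hcond : padicValNat 2 a = padicValNat 2 b ∧ padicValNat 2 a < padicValNat 2 n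
  · rw [if_pos hcond]
    obtain ⟨hab, han⟩ := hcond
    set s := padicValNat 2 a with hs
    set g := Nat.gcd n (Nat.gcd a b) with hg
    have hgpos : 0 < g := Nat.gcd_pos_of_pos_left _ hn
    have hgn : g ∣ n := Nat.gcd_dvd_left _ _
    set ζ₀ : ℂ := Complex.exp (Real.pi * Complex.I / 2 ^ s) with hζ₀
    have hζ₀ne : ζ₀ ≠ 0 := Complex.exp_ne_zero _
    -- ζ₀ ^ c = -1 when v2 c = s
    have hpow : ∀ c : ℕ, 0 < c → padicValNat 2 c = s → ζ₀ ^ c = -1 := by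
      intro c hc hcs
      have hdvd : 2 ^ s ∣ c := hcs ▸ pow_padicValNat_dvd
      obtain ⟨c', hc'⟩ := hdvd
      have hc'0 : c' ≠ 0 := by rintro rfl; omega
      have hodd : ¬ 2 ∣ c' := by
        intro hd
        have h1 : 1 ≤ padicValNat 2 c' :=
          one_le_padicValNat_of_dvd hc'0 hd
        have h2 : padicValNat 2 c = s + padicValNat 2 c' := by
          rw [hc', padicValNat.mul (by positivity) hc'0, padicValNat.prime_pow]
        omega
      obtain ⟨k, hk⟩ := Nat.odd_iff.mpr (Nat.two_dvd_ne_zero.mp hodd)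
      have hcast : (c : ℂ) = 2 ^ s * c' := by exact_mod_cast congrArg (Nat.cast : ℕ → ℂ) hc'
      rw [hζ₀, ← Complex.exp_nat_mul]
      have : (c : ℂ) * (Real.pi * Complex.I / 2 ^ s) = c' * (Real.pi * Complex.I) := by
        rw [hcast]; field_simp
      rw [this, Complex.exp_nat_mul, Complex.exp_pi_mul_I, Odd.neg_one_pow ⟨k, by exact_mod_cast hk⟩]
    have hζ₀a : ζ₀ ^ a = -1 := hpow a ha rfl
    have hζ₀b : ζ₀ ^ b = -1 := hpow b hb hab.symm
    have hζ₀n : ζ₀ ^ n = 1 := by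
      have hdvd : 2 ^ (s + 1) ∣ n :=
        dvd_trans (pow_dvd_pow 2 han) pow_padicValNat_dvd
      obtain ⟨m, hm⟩ := hdvd
      have hcast : (n : ℂ) = 2 ^ (s + 1) * m := by exact_mod_cast congrArg (Nat.cast : ℕ → ℂ) hm
      rw [hζ₀, ← Complex.exp_nat_mul]
      have : (n : ℂ) * (Real.pi * Complex.I / 2 ^ s) = m * (2 * Real.pi * Complex.I) := by
        rw [hcast]; field_simp; ring
      rw [this, Complex.exp_nat_mul, Complex.exp_two_pi_mul_I, one_pow]
    -- set equality
    have hset : {ζ : ℂ | ζ ^ n = 1 ∧ ζ ^ a = -1 ∧ ζ ^ b = -1} =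
        (fun w => ζ₀ * w) '' ↑(Polynomial.nthRootsFinset g (1 : ℂ)) := by
      ext ζ
      simp only [Set.mem_image, Finset.mem_coe, Polynomial.mem_nthRootsFinset hgpos,
        Set.mem_setOf_eq]
      constructor
      · rintro ⟨h1, h2, h3⟩
        refine ⟨ζ₀⁻¹ * ζ, ?_, by field_simp⟩
        have hwn : (ζ₀⁻¹ * ζ) ^ n = 1 := by
          rw [mul_pow, h1, inv_pow, hζ₀n]; norm_num
        have hwa : (ζ₀⁻¹ * ζ) ^ a = 1 := by
          rw [mul_pow, h2, inv_pow, hζ₀a]; norm_num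
        have hwb : (ζ₀⁻¹ * ζ) ^ b = 1 := by
          rw [mul_pow, h3, inv_pow, hζ₀b]; norm_num
        have : orderOf (ζ₀⁻¹ * ζ) ∣ g :=
          Nat.dvd_gcd (orderOf_dvd_of_pow_eq_one hwn)
            (Nat.dvd_gcd (orderOf_dvd_of_pow_eq_one hwa) (orderOf_dvd_of_pow_eq_one hwb))
        exact orderOf_dvd_iff_pow_eq_one.mp this
      · rintro ⟨w, hw, rfl⟩
        have hwn : w ^ n = 1 := by
          obtain ⟨t, ht⟩ := hgn
          rw [ht, pow_mul, hw, one_pow]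
        have hwa : w ^ a = 1 := by
          obtain ⟨t, ht⟩ := dvd_trans (Nat.gcd_dvd_right n _) (Nat.gcd_dvd_left a b)
          rw [ht, pow_mul, hw, one_pow]
        have hwb : w ^ b = 1 := by
          obtain ⟨t, ht⟩ := dvd_trans (Nat.gcd_dvd_right n _) (Nat.gcd_dvd_right a b)
          rw [ht, pow_mul, hw, one_pow]
        refine ⟨by rw [mul_pow, hζ₀n, hwn, mul_one], by rw [mul_pow, hζ₀a, hwa, mul_one],
          by rw [mul_pow, hζ₀b, hwb, mul_one]⟩
    rw [hset, Set.ncard_image_of_injective _ (mul_right_injective₀ hζ₀ne),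
      Set.ncard_coe_finset, (Complex.isPrimitiveRoot_exp g hgpos.ne').card_nthRootsFinset]
  · rw [if_neg hcond]
    have hempty : {ζ : ℂ | ζ ^ n = 1 ∧ ζ ^ a = -1 ∧ ζ ^ b = -1} = ∅ := by
      ext ζ
      simp only [Set.mem_setOf_eq, Set.mem_empty_iff_false, iff_false]
      rintro ⟨h1, h2, h3⟩
      have hda := order_val ζ a ha h2
      have hdb := order_val ζ b hb h3
      have hdn : orderOf ζ ∣ n := orderOf_dvd_of_pow_eq_one h1
      have hord : 0 < orderOf ζ := Nat.pos_of_dvd_of_pos hdn hn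
      have hle : padicValNat 2 (orderOf ζ) ≤ padicValNat 2 n := by
        obtain ⟨t, ht⟩ := hdn
        have ht0 : t ≠ 0 := by rintro rfl; omega
        rw [ht, padicValNat.mul hord.ne' ht0]
        omega
      exact hcond ⟨by omega, by omega⟩
    rw [hempty, Set.ncard_empty]
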